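/- Let m, λ, a, b be real constants. Define the ghost field g(u,v) = −1 + cosh²(au) + cosh²(bv), f(u,v) = 0, and r(u,v) = 2m − 4λ²uv − 1/16 + (1/32)(cosh(4au) + cosh(4bv)) − (1/4)(a²u² + b²v²). Then ∂_u∂_v r = −4λ², ∂_u∂_u r = (∂_u g)², and ∂_v∂_v r = (∂_v g)² at every point (u,v) ∈ ℝ². -/

import Mathlib

private lemma hcosh' (c x : ℝ) :
    HasDerivAt (fun y => Real.cosh (c * y)) (c * Real.sinh (c * x)) x := by
  have h := (Real.hasDerivAt_cosh (c * x)).comp x ((hasDerivAt_id x).const_mul c)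
  refine h.congr_deriv ?_
  ring

private lemma hsinh' (c x : ℝ) :
    HasDerivAt (fun y => Real.sinh (c * y)) (c * Real.cosh (c * x)) x := by
  have h := (Real.hasDerivAt_sinh (c * x)).comp x ((hasDerivAt_id x).const_mul c)
  refine h.congr_deriv ?_
  ring

private lemma dv_lem (m lam a b x v : ℝ) :
    deriv (fun y => 2 * m - 4 * lam ^ 2 * x * y - 1 / 16
        + (1 / 32) * (Real.cosh (4 * a * x) + Real.cosh (4 * b * y))
        - (1 / 4) * (a ^ 2 * x ^ 2 + b ^ 2 * y ^ 2)) v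
      = -(4 * lam ^ 2 * x) + (b / 8) * Real.sinh (4 * b * v) - (b ^ 2 / 2) * v := by
  have h0 := ((((hasDerivAt_const v (2 * m)).sub
      ((hasDerivAt_id v).const_mul (4 * lam ^ 2 * x))).sub
      (hasDerivAt_const v ((1 : ℝ) / 16))).add
      (((hasDerivAt_const v (Real.cosh (4 * a * x))).add (hcosh' (4 * b) v)).const_mul
        ((1 : ℝ) / 32))).sub
      (((hasDerivAt_const v (a ^ 2 * x ^ 2)).add
        ((hasDerivAt_pow 2 v).const_mul (b ^ 2))).const_mul ((1 : ℝ) / 4))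
  have h : HasDerivAt (fun y => 2 * m - 4 * lam ^ 2 * x * y - 1 / 16
        + (1 / 32) * (Real.cosh (4 * a * x) + Real.cosh (4 * b * y))
        - (1 / 4) * (a ^ 2 * x ^ 2 + b ^ 2 * y ^ 2))
      (-(4 * lam ^ 2 * x) + (b / 8) * Real.sinh (4 * b * v) - (b ^ 2 / 2) * v) v := by
    refine h0.congr_deriv ?_
    push_cast
    ring
  exact h.deriv

private lemma du_lem (m lam a b x v : ℝ) :
    deriv (fun x' => 2 * m - 4 * lam ^ 2 * x' * v - 1 / 16
        + (1 / 32) * (Real.cosh (4 * a * x') + Real.cosh (4 * b * v))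
        - (1 / 4) * (a ^ 2 * x' ^ 2 + b ^ 2 * v ^ 2)) x
      = -(4 * lam ^ 2 * v) + (a / 8) * Real.sinh (4 * a * x) - (a ^ 2 / 2) * x := by
  have h0 := ((((hasDerivAt_const x (2 * m)).sub
      (((hasDerivAt_id x).const_mul (4 * lam ^ 2)).mul_const v)).sub
      (hasDerivAt_const x ((1 : ℝ) / 16))).add
      (((hcosh' (4 * a) x).add (hasDerivAt_const x (Real.cosh (4 * b * v)))).const_mul
        ((1 : ℝ) / 32))).sub
      ((((hasDerivAt_pow 2 x).const_mul (a ^ 2)).add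
        (hasDerivAt_const x (b ^ 2 * v ^ 2))).const_mul ((1 : ℝ) / 4))
  have h : HasDerivAt (fun x' => 2 * m - 4 * lam ^ 2 * x' * v - 1 / 16
        + (1 / 32) * (Real.cosh (4 * a * x') + Real.cosh (4 * b * v))
        - (1 / 4) * (a ^ 2 * x' ^ 2 + b ^ 2 * v ^ 2))
      (-(4 * lam ^ 2 * v) + (a / 8) * Real.sinh (4 * a * x) - (a ^ 2 / 2) * x) x := by
    refine h0.congr_deriv ?_
    push_cast
    ring
  exact h.deriv

/-- For the colliding hyperbolic ghost fields
`g(u,v) = −1 + cosh²(au) + cosh²(bv)`, real field `f = 0`, and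
`r(u,v) = 2m − 4λ²uv − 1/16 + (1/32)(cosh(4au) + cosh(4bv)) − (1/4)(a²u² + b²v²)`,
the CGHS field equations `∂_u∂_v r = −4λ²`, `∂_u∂_u r = (∂_u g)²`,
`∂_v∂_v r = (∂_v g)²` hold at every point of `ℝ²`. -/
theorem stmt_4 (m lam a b : ℝ)
    (g : ℝ → ℝ → ℝ)
    (hg : g = fun u v => -1 + Real.cosh (a * u) ^ 2 + Real.cosh (b * v) ^ 2)
    (f : ℝ → ℝ → ℝ) (hf : f = fun _ _ => (0 : ℝ))
    (r : ℝ → ℝ → ℝ)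
    (hr : r = fun u v =>
      2 * m - 4 * lam ^ 2 * u * v - 1 / 16
        + (1 / 32) * (Real.cosh (4 * a * u) + Real.cosh (4 * b * v))
        - (1 / 4) * (a ^ 2 * u ^ 2 + b ^ 2 * v ^ 2)) :
    ∀ u v : ℝ,
      deriv (fun x => deriv (fun y => r x y) v) u = -4 * lam ^ 2 ∧
      deriv (fun x => deriv (fun x' => r x' v) x) u
        = (deriv (fun x => g x v) u) ^ 2 ∧
      deriv (fun y => deriv (fun y' => r u y') y) v
        = (deriv (fun y => g u y) v) ^ 2 := by
  subst hg hf hr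
  intro u v
  refine ⟨?_, ?_, ?_⟩
  · -- ∂_u ∂_v r = -4 λ²
    simp only [dv_lem m lam a b]
    have h : HasDerivAt
        (fun x : ℝ => -(4 * lam ^ 2 * x) + (b / 8) * Real.sinh (4 * b * v)
          - (b ^ 2 / 2) * v) (-4 * lam ^ 2) u := by
      have h0 := ((((hasDerivAt_id u).const_mul (4 * lam ^ 2)).neg).add_const
        ((b / 8) * Real.sinh (4 * b * v))).sub_const ((b ^ 2 / 2) * v)
      refine h0.congr_deriv ?_
      ring
    exact h.deriv
  · -- ∂_u ∂_u r = (∂_u g)²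
    simp only [du_lem m lam a b]
    have hL : HasDerivAt
        (fun x : ℝ => -(4 * lam ^ 2 * v) + (a / 8) * Real.sinh (4 * a * x)
          - (a ^ 2 / 2) * x)
        ((a / 8) * (4 * a * Real.cosh (4 * a * u)) - a ^ 2 / 2) u := by
      have h0 := (((hasDerivAt_const u (-(4 * lam ^ 2 * v))).add
        ((hsinh' (4 * a) u).const_mul (a / 8))).sub
        ((hasDerivAt_id u).const_mul (a ^ 2 / 2)))
      refine h0.congr_deriv ?_
      ring
    have hR := ((hasDerivAt_const u (-1 : ℝ)).add ((hcosh' a u).pow 2)).add_const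
      (Real.cosh (b * v) ^ 2)
    rw [hL.deriv, show deriv (fun x => -1 + Real.cosh (a * x) ^ 2 + Real.cosh (b * v) ^ 2) u = _ from hR.deriv]
    have h4 : 4 * a * u = 2 * (2 * (a * u)) := by ring
    have hs : Real.sinh (a * u) ^ 2 = Real.cosh (a * u) ^ 2 - 1 := Real.sinh_sq (a * u)
    rw [h4, Real.cosh_two_mul, Real.cosh_two_mul, Real.sinh_two_mul]
    push_cast
    linear_combination (a ^ 2 / 2 * (Real.sinh (a * u) ^ 2 - Real.cosh (a * u) ^ 2 + 1) - a ^ 2) * hs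
  · -- ∂_v ∂_v r = (∂_v g)²
    simp only [dv_lem m lam a b]
    have hL : HasDerivAt
        (fun y : ℝ => -(4 * lam ^ 2 * u) + (b / 8) * Real.sinh (4 * b * y)
          - (b ^ 2 / 2) * y)
        ((b / 8) * (4 * b * Real.cosh (4 * b * v)) - b ^ 2 / 2) v := by
      have h0 := (((hasDerivAt_const v (-(4 * lam ^ 2 * u))).add
        ((hsinh' (4 * b) v).const_mul (b / 8))).sub
        ((hasDerivAt_id v).const_mul (b ^ 2 / 2)))
      refine h0.congr_deriv ?_
      ring
    have hR := ((hcosh' b v).pow 2).const_add (-1 + Real.cosh (a * u) ^ 2)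
    rw [hL.deriv, show deriv (fun y => -1 + Real.cosh (a * u) ^ 2 + Real.cosh (b * y) ^ 2) v = _ from hR.deriv]
    have h4 : 4 * b * v = 2 * (2 * (b * v)) := by ring
    have hs : Real.sinh (b * v) ^ 2 = Real.cosh (b * v) ^ 2 - 1 := Real.sinh_sq (b * v)
    rw [h4, Real.cosh_two_mul, Real.cosh_two_mul, Real.sinh_two_mul]
    push_cast
    linear_combination (b ^ 2 / 2 * (Real.sinh (b * v) ^ 2 - Real.cosh (b * v) ^ 2 + 1) - b ^ 2) * hs
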